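/- For every integer i and every natural number n ≥ 0, the quotient {i}_{q,n} / {n}_q! is a Laurent polynomial, i.e., lies in ℤ[q,q^{-1}]. -/

import Mathlib

open Finset

noncomputable def qbBnum (i : ℤ) (n : ℕ) : RatFunc ℚ :=
  ∏ t ∈ Finset.range n, ((RatFunc.X : RatFunc ℚ) ^ (i - (t : ℤ)) - 1)

noncomputable def qbDden (n : ℕ) : RatFunc ℚ :=
  ∏ t ∈ Finset.range n, ((RatFunc.X : RatFunc ℚ) ^ ((t : ℤ) + 1) - 1)

noncomputable def qbB (i : ℤ) (n : ℕ) : RatFunc ℚ := qbBnum i n / qbDden n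

lemma qbX_ne_zero : (RatFunc.X : RatFunc ℚ) ≠ 0 := RatFunc.X_ne_zero

lemma qb_factor_ne (k : ℤ) (hk : 1 ≤ k) : (RatFunc.X : RatFunc ℚ) ^ k - 1 ≠ 0 := by
  have hm : k = (k.toNat : ℤ) := (Int.toNat_of_nonneg (by omega)).symm
  rw [hm, zpow_natCast]
  have hp : (Polynomial.X : Polynomial ℚ) ^ k.toNat - 1 ≠ 0 := by
    have : 0 < k.toNat := by omega
    simpa using Polynomial.X_pow_sub_C_ne_zero this (1 : ℚ)
  have := RatFunc.algebraMap_ne_zero hp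
  simpa [map_sub, map_pow, RatFunc.algebraMap_X] using this

lemma qbDden_ne (n : ℕ) : qbDden n ≠ 0 := by
  refine Finset.prod_ne_zero_iff.mpr fun t _ => qb_factor_ne _ (by omega)

lemma qbBnum_succ_left (i : ℤ) (n : ℕ) :
    qbBnum (i + 1) (n + 1) = qbBnum i n * ((RatFunc.X : RatFunc ℚ) ^ (i + 1) - 1) := by
  rw [qbBnum, Finset.prod_range_succ']
  congr 1
  · apply Finset.prod_congr rfl
    intro t _
    congr 2
    push_cast; ring
  · norm_num

lemma qbBnum_succ_right (i : ℤ) (n : ℕ) :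
    qbBnum i (n + 1) = qbBnum i n * ((RatFunc.X : RatFunc ℚ) ^ (i - (n : ℤ)) - 1) := by
  rw [qbBnum, Finset.prod_range_succ]; rfl

lemma qbDden_succ (n : ℕ) :
    qbDden (n + 1) = qbDden n * ((RatFunc.X : RatFunc ℚ) ^ ((n : ℤ) + 1) - 1) := by
  rw [qbDden, qbDden, Finset.prod_range_succ]

lemma qb_key (i : ℤ) (n : ℕ) :
    (RatFunc.X : RatFunc ℚ) ^ (i + 1) - 1 =
      (RatFunc.X : RatFunc ℚ) ^ (i - (n : ℤ)) * ((RatFunc.X : RatFunc ℚ) ^ ((n : ℤ) + 1) - 1)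
        + ((RatFunc.X : RatFunc ℚ) ^ (i - (n : ℤ)) - 1) := by
  have h : (RatFunc.X : RatFunc ℚ) ^ (i - (n : ℤ)) * (RatFunc.X : RatFunc ℚ) ^ ((n : ℤ) + 1)
      = (RatFunc.X : RatFunc ℚ) ^ (i + 1) := by
    rw [← zpow_add₀ qbX_ne_zero]
    congr 1; ring
  rw [mul_sub, mul_one, h]; ring

lemma qb_rec (i : ℤ) (n : ℕ) :
    qbB (i + 1) (n + 1) =
      (RatFunc.X : RatFunc ℚ) ^ (i - (n : ℤ)) * qbB i n + qbB i (n + 1) := by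
  rw [qbB, qbB, qbB, qbBnum_succ_left, qbBnum_succ_right, qbDden_succ, qb_key i n]
  have h1 := qbDden_ne n
  have h2 : (RatFunc.X : RatFunc ℚ) ^ ((n : ℤ) + 1) - 1 ≠ 0 := qb_factor_ne _ (by omega)
  field_simp

lemma qb_zero (n : ℕ) : qbB 0 (n + 1) = 0 := by
  rw [qbB, qbBnum]
  rw [Finset.prod_eq_zero (Finset.mem_range.mpr (Nat.succ_pos n)) (by norm_num)]
  simp

lemma qb_zpow_mem (k : ℤ) :
    (RatFunc.X : RatFunc ℚ) ^ k ∈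
      Algebra.adjoin ℤ ({RatFunc.X, RatFunc.X⁻¹} : Set (RatFunc ℚ)) := by
  have hX : (RatFunc.X : RatFunc ℚ) ∈
      Algebra.adjoin ℤ ({RatFunc.X, RatFunc.X⁻¹} : Set (RatFunc ℚ)) :=
    Algebra.subset_adjoin (Set.mem_insert _ _)
  have hXi : (RatFunc.X : RatFunc ℚ)⁻¹ ∈
      Algebra.adjoin ℤ ({RatFunc.X, RatFunc.X⁻¹} : Set (RatFunc ℚ)) :=
    Algebra.subset_adjoin (Set.mem_insert_of_mem _ rfl)
  rcases le_or_gt 0 k with hk | hk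
  · have : k = (k.toNat : ℤ) := (Int.toNat_of_nonneg hk).symm
    rw [this, zpow_natCast]
    exact pow_mem hX _
  · have : k = -((-k).toNat : ℤ) := by omega
    rw [this, zpow_neg, ← inv_zpow, zpow_natCast]
    exact pow_mem hXi _

lemma qbB_mem (n : ℕ) : ∀ i : ℤ, qbB i n ∈
    Algebra.adjoin ℤ ({RatFunc.X, RatFunc.X⁻¹} : Set (RatFunc ℚ)) := by
  induction n with
  | zero =>
      intro i
      simp only [qbB, qbBnum, qbDden, Finset.range_zero, Finset.prod_empty, div_one]
      exact one_mem _
  | succ n ih =>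
      intro i
      induction i using Int.induction_on with
      | zero => rw [qb_zero]; exact zero_mem _
      | succ j hj =>
          rw [qb_rec]
          exact add_mem (mul_mem (qb_zpow_mem _) (ih _)) hj
      | pred j hj =>
          have h := qb_rec (-(j:ℤ) - 1) n
          have h2 : qbB (-(j:ℤ) - 1) (n + 1) =
              qbB (-(j:ℤ)) (n + 1) -
                (RatFunc.X : RatFunc ℚ) ^ (-(j:ℤ) - 1 - (n : ℤ)) * qbB (-(j:ℤ) - 1) n := by
            rw [show (-(j:ℤ) - 1) + 1 = -(j:ℤ) by ring] at h
            rw [h]; ring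
          rw [h2]
          exact sub_mem hj (mul_mem (qb_zpow_mem _) (ih _))

/-- For `i ∈ ℤ` and `n ∈ ℕ`, the q-binomial coefficient
`{i}_{q,n} / {n}_q! = (∏_{t=0}^{n-1} (q^{i-t} − 1)) / (∏_{t=1}^{n} (q^t − 1))`,
taken in `ℚ(q)`, lies in `ℤ[q, q⁻¹]`. -/
theorem qbinom_mem_laurent (i : ℤ) (n : ℕ) :
    (∏ t ∈ Finset.range n, ((RatFunc.X : RatFunc ℚ) ^ (i - (t : ℤ)) - 1)) /
      (∏ t ∈ Finset.range n, ((RatFunc.X : RatFunc ℚ) ^ ((t : ℤ) + 1) - 1)) ∈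
      Algebra.adjoin ℤ ({RatFunc.X, RatFunc.X⁻¹} : Set (RatFunc ℚ)) := by
  exact qbB_mem n i
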